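/- Let Θ and X be finite nonempty sets, 𝒜 a nonempty set, ℓ : 𝒜 → ℝ^X a loss, and Φ an entropy on Δ_Θ differentiable on relint(Δ_Θ) whose entropic dual Φ* is differentiable on ℝ^Θ with, for every w ∈ ℝ^Θ, ∇Φ*(w) ∈ relint(Δ_Θ) and Φ*(w) = ⟨∇Φ*(w), w⟩ − Φ(∇Φ*(w)), and with ∇Φ*(∇Φ(μ)) = μ for all μ ∈ relint(Δ_Θ). If ℓ is Φ-mixable, then for every initial μ^0 ∈ relint(Δ_Θ), every T ∈ ℕ, every sequence x^1, …, x^T ∈ X and every A^1, …, A^T ∈ 𝒜^Θ, there exist â^1, …, â^T ∈ 𝒜 such that for every μ' ∈ Δ_Θ: Σ_{t=1}^T ℓ_{x^t}(â^t) ≤ ⟨μ', Σ_{t=1}^T ℓ_{x^t}(A^t)⟩ + D_Φ(μ', μ^0). -/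

import Mathlib

open Finset Topology Filter

/-- The probability simplex on a finite type `Θ`. -/
def probSimplex (Θ : Type*) [Fintype Θ] : Set (Θ → ℝ) :=
  {μ | (∀ θ, 0 ≤ μ θ) ∧ ∑ θ, μ θ = 1}

/-- The relative interior of the probability simplex. -/
def probRelint (Θ : Type*) [Fintype Θ] : Set (Θ → ℝ) :=
  {μ | (∀ θ, 0 < μ θ) ∧ ∑ θ, μ θ = 1}

/-- Standard inner product on `ℝ^Θ`. -/
noncomputable def ip {Θ : Type*} [Fintype Θ] (μ v : Θ → ℝ) : ℝ := ∑ θ, μ θ * v θ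

/-- Entropic dual: `Φ*(v) = sup_{μ ∈ Δ_Θ} ⟨μ, v⟩ - Φ(μ)`. -/
noncomputable def edual {Θ : Type*} [Fintype Θ] (Φ : (Θ → ℝ) → ℝ) (v : Θ → ℝ) : ℝ :=
  sSup ((fun μ => ip μ v - Φ μ) '' probSimplex Θ)

/-- The continuous linear map `v ↦ ⟨w, v⟩` representing a gradient vector `w`. -/
noncomputable def pairCLM {Θ : Type*} [Fintype Θ] (w : Θ → ℝ) : (Θ → ℝ) →L[ℝ] ℝ :=
  ∑ θ, w θ • ContinuousLinearMap.proj θ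

/-- Bregman divergence of `Φ` with gradient map `g`. -/
noncomputable def breg {Θ : Type*} [Fintype Θ] (Φ : (Θ → ℝ) → ℝ)
    (g : (Θ → ℝ) → Θ → ℝ) (μ μ' : Θ → ℝ) : ℝ :=
  Φ μ - Φ μ' - ip (μ - μ') (g μ')

section Helpers

variable {Θ : Type*} [Fintype Θ]

lemma relint_subset_simplex : probRelint Θ ⊆ probSimplex Θ :=
  fun _ h => ⟨fun θ => (h.1 θ).le, h.2⟩

lemma ip_comm (a b : Θ → ℝ) : ip a b = ip b a := by
  simp [ip, mul_comm]

lemma ip_sub_left (a b w : Θ → ℝ) : ip (a - b) w = ip a w - ip b w := by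
  simp [ip, sub_mul, Finset.sum_sub_distrib]

lemma ip_sub_right (a w c : Θ → ℝ) : ip a (w - c) = ip a w - ip a c := by
  simp [ip, mul_sub, Finset.sum_sub_distrib]

lemma pairCLM_apply (w v : Θ → ℝ) : pairCLM w v = ip w v := by
  simp [pairCLM, ip, ContinuousLinearMap.sum_apply]

lemma ip_le_abs_sum (μ c : Θ → ℝ) (hμ : μ ∈ probSimplex Θ) :
    ip μ c ≤ ∑ θ, |c θ| := by
  refine Finset.sum_le_sum fun θ _ => ?_
  have h1 : μ θ ≤ 1 := by
    rw [← hμ.2]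
    exact Finset.single_le_sum (fun i _ => hμ.1 i) (Finset.mem_univ θ)
  calc μ θ * c θ ≤ μ θ * |c θ| := by
        exact mul_le_mul_of_nonneg_left (le_abs_self _) (hμ.1 θ)
    _ ≤ 1 * |c θ| := mul_le_mul_of_nonneg_right h1 (abs_nonneg _)
    _ = |c θ| := one_mul _

lemma neg_abs_sum_le_ip (μ c : Θ → ℝ) (hμ : μ ∈ probSimplex Θ) :
    -∑ θ, |c θ| ≤ ip μ c := by
  have := ip_le_abs_sum μ (-c) hμ
  simp only [ip, Pi.neg_apply, mul_neg, Finset.sum_neg_distrib, abs_neg] at this ⊢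
  linarith [this]

lemma isCompact_probSimplex : IsCompact (probSimplex Θ) := by
  have : probSimplex Θ = stdSimplex ℝ Θ := rfl
  rw [this]
  exact isCompact_stdSimplex ℝ Θ

/-- A lower semicontinuous function on the (compact) simplex is bounded below. -/
lemma lsc_bddBelow {Φ : (Θ → ℝ) → ℝ} (hlsc : LowerSemicontinuousOn Φ (probSimplex Θ)) :
    ∃ m : ℝ, ∀ μ ∈ probSimplex Θ, m ≤ Φ μ := by
  have hcov : ∀ μ (hμ : μ ∈ probSimplex Θ), ∃ U ∈ 𝓝 μ,
      ∀ ν ∈ U ∩ probSimplex Θ, Φ μ - 1 < Φ ν := by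
    intro μ hμ
    have h := hlsc μ hμ (Φ μ - 1) (by linarith)
    rw [Filter.eventually_iff, mem_nhdsWithin] at h
    obtain ⟨U, hUo, hμU, hU⟩ := h
    exact ⟨U, hUo.mem_nhds hμU, fun ν hν => hU hν⟩
  choose U hU1 hU2 using hcov
  obtain ⟨t, hcover⟩ := isCompact_probSimplex.elim_nhds_subcover' U hU1
  rcases t.eq_empty_or_nonempty with ht | ht
  · refine ⟨0, fun μ hμ => ?_⟩
    have := hcover hμ
    simp [ht] at this
  · refine ⟨t.inf' ht (fun p => Φ (p : Θ → ℝ) - 1), fun μ hμ => ?_⟩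
    have := hcover hμ
    simp only [Set.mem_iUnion] at this
    obtain ⟨p, hp, hμp⟩ := this
    have h1 : Φ (p : Θ → ℝ) - 1 < Φ μ := hU2 (p : Θ → ℝ) p.2 μ ⟨hμp, hμ⟩
    have h2 : t.inf' ht (fun p => Φ (p : Θ → ℝ) - 1) ≤ Φ (p : Θ → ℝ) - 1 :=
      Finset.inf'_le _ hp
    linarith

lemma le_edual {Φ : (Θ → ℝ) → ℝ} (hlsc : LowerSemicontinuousOn Φ (probSimplex Θ))
    (w : Θ → ℝ) {μ : Θ → ℝ} (hμ : μ ∈ probSimplex Θ) :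
    ip μ w - Φ μ ≤ edual Φ w := by
  obtain ⟨m, hm⟩ := lsc_bddBelow hlsc
  refine le_csSup ⟨(∑ θ, |w θ|) - m, ?_⟩ ⟨μ, hμ, rfl⟩
  rintro r ⟨ν, hν, rfl⟩
  have h1 := ip_le_abs_sum ν w hν
  have h2 := hm ν hν
  simp only
  linarith

/-- Key gradient identity: along directions tangent to the simplex, the gradient of `Φ`
at `gs w` agrees with `w`. -/
lemma grad_eq {Θ : Type*} [Fintype Θ] [Nonempty Θ] {Φ : (Θ → ℝ) → ℝ}
    (hlsc : LowerSemicontinuousOn Φ (probSimplex Θ))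
    {g gs : (Θ → ℝ) → Θ → ℝ}
    (hg : ∀ μ ∈ probRelint Θ, HasFDerivAt Φ (pairCLM (g μ)) μ)
    (hgsmem : ∀ w : Θ → ℝ, gs w ∈ probRelint Θ)
    (hfenchel : ∀ w : Θ → ℝ, edual Φ w = ip (gs w) w - Φ (gs w))
    (w v : Θ → ℝ) (hv : ∑ θ, v θ = 0) :
    ip v (g (gs w)) = ip v w := by
  set μ : Θ → ℝ := gs w with hμdef
  have hμ : μ ∈ probRelint Θ := hgsmem w
  set ε : ℝ := Finset.univ.inf' Finset.univ_nonempty (fun θ => μ θ / (|v θ| + 1)) with hε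
  have hεpos : 0 < ε := by
    rw [hε]
    apply Finset.lt_inf'_iff (α := ℝ) _ |>.2
    intro θ _
    exact div_pos (hμ.1 θ) (by positivity)
  have hmem : ∀ t : ℝ, |t| < ε → μ + t • v ∈ probSimplex Θ := by
    intro t ht
    constructor
    · intro θ
      have hle : ε ≤ μ θ / (|v θ| + 1) := Finset.inf'_le _ (Finset.mem_univ θ)
      have h1 : |t| * (|v θ| + 1) < μ θ := by
        have : ε * (|v θ| + 1) ≤ μ θ := by
          rw [← le_div_iff₀ (by positivity)]
          exact hle
        nlinarith [abs_nonneg t, abs_nonneg (v θ)]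
      have h2 : |t * v θ| ≤ |t| * (|v θ| + 1) := by
        rw [abs_mul]
        nlinarith [abs_nonneg t, abs_nonneg (v θ)]
      have := neg_abs_le (t * v θ)
      simp only [Pi.add_apply, Pi.smul_apply, smul_eq_mul]
      linarith
    · simp [Finset.sum_add_distrib, ← Finset.mul_sum, hv, hμ.2]
  -- the function along the line
  set f : ℝ → ℝ := fun t => Φ (μ + t • v) - ip (μ + t • v) w with hf
  have hf0 : f 0 = -(edual Φ w) := by
    simp only [hf, zero_smul, add_zero]
    rw [hfenchel w]
    ring
  have hmin : IsLocalMin f 0 := by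
    rw [IsLocalMin, IsMinFilter, Metric.eventually_nhds_iff]
    refine ⟨ε, hεpos, fun t ht => ?_⟩
    rw [Real.dist_eq, sub_zero] at ht
    have hmem' := hmem t ht
    have := le_edual hlsc w hmem'
    rw [hf0]
    simp only [hf]
    linarith
  have hipline : ∀ t : ℝ, ip (μ + t • v) w = ip μ w + t * ip v w := by
    intro t
    simp only [ip, Pi.add_apply, Pi.smul_apply, smul_eq_mul, add_mul,
      Finset.sum_add_distrib, Finset.mul_sum, mul_assoc]
  have hc : HasDerivAt (fun t : ℝ => μ + t • v) v 0 := by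
    have h1 : HasDerivAt (fun t : ℝ => t • v) ((1 : ℝ) • v) 0 :=
      (hasDerivAt_id 0).smul_const v
    simpa using h1.const_add μ
  have hΦ' : HasFDerivAt Φ (pairCLM (g μ)) ((fun t : ℝ => μ + t • v) 0) := by
    simpa using hg μ hμ
  have hd1 : HasDerivAt (fun t : ℝ => Φ (μ + t • v)) (pairCLM (g μ) v) 0 :=
    hΦ'.comp_hasDerivAt 0 hc
  have hd2 : HasDerivAt (fun t : ℝ => ip (μ + t • v) w) (ip v w) 0 := by
    have : HasDerivAt (fun t : ℝ => ip μ w + t * ip v w) (ip v w) 0 := by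
      simpa using ((hasDerivAt_id (0:ℝ)).mul_const (ip v w)).const_add (ip μ w)
    have h0 : (fun t : ℝ => ip (μ + t • v) w) = fun t => ip μ w + t * ip v w :=
      funext hipline
    rw [h0]
    exact this
  have hd : HasDerivAt f (pairCLM (g μ) v - ip v w) 0 := hd1.sub hd2
  have hzero := hmin.hasDerivAt_eq_zero hd
  rw [pairCLM_apply] at hzero
  have := ip_comm (g μ) v
  linarith [hzero, this.symm.le]

end Helpers

/-- Φ-mixability implies the regret bound against every mixture `μ'` over experts. -/
theorem stmt_9 {Θ X 𝒜 : Type*} [Fintype Θ] [Nonempty Θ] [Fintype X] [Nonempty X]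
    [Nonempty 𝒜]
    (ℓ : 𝒜 → X → ℝ)
    (Φ : (Θ → ℝ) → ℝ)
    (hconv : ConvexOn ℝ (probSimplex Θ) Φ)
    (hlsc : LowerSemicontinuousOn Φ (probSimplex Θ))
    (g gs : (Θ → ℝ) → Θ → ℝ)
    (hg : ∀ μ ∈ probRelint Θ, HasFDerivAt Φ (pairCLM (g μ)) μ)
    (hgs : ∀ w : Θ → ℝ, HasFDerivAt (edual Φ) (pairCLM (gs w)) w)
    (hgsmem : ∀ w : Θ → ℝ, gs w ∈ probRelint Θ)
    (hfenchel : ∀ w : Θ → ℝ, edual Φ w = ip (gs w) w - Φ (gs w))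
    (hinv : ∀ μ ∈ probRelint Θ, gs (g μ) = μ)
    (hmix : ∀ A : Θ → 𝒜, ∀ μ ∈ probRelint Θ, ∃ ahat : 𝒜, ∀ x : X,
      ℓ ahat x ≤ sInf ((fun μ' => ip μ' (fun θ => ℓ (A θ) x) + breg Φ g μ' μ) ''
        probSimplex Θ))
    (μ0 : Θ → ℝ) (hμ0 : μ0 ∈ probRelint Θ)
    (T : ℕ) (x : Fin T → X) (A : Fin T → Θ → 𝒜) :
    ∃ ahat : Fin T → 𝒜, ∀ μ' ∈ probSimplex Θ,
      ∑ t, ℓ (ahat t) (x t)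
        ≤ ip μ' (fun θ => ∑ t, ℓ (A t θ) (x t)) + breg Φ g μ' μ0 := by
  obtain ⟨mlow, hmlow⟩ := lsc_bddBelow hlsc
  -- cumulative weight vectors
  set W : ℕ → Θ → ℝ := fun n θ =>
    g μ0 θ - ∑ s ∈ Finset.univ.filter (fun s : Fin T => (s : ℕ) < n), ℓ (A s θ) (x s)
    with hW
  set mfun : ℕ → Θ → ℝ := fun n => gs (W n) with hmfun
  have hmrelint : ∀ n, mfun n ∈ probRelint Θ := fun n => hgsmem _
  -- choose the predictions
  have hchoice : ∀ t : Fin T, ∃ a : 𝒜, ∀ xx : X,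
      ℓ a xx ≤ sInf ((fun μ' => ip μ' (fun θ => ℓ (A t θ) xx) + breg Φ g μ' (mfun t)) ''
        probSimplex Θ) := fun t => hmix (A t) (mfun t) (hmrelint t)
  choose ahat hahat using hchoice
  refine ⟨ahat, fun μ' hμ' => ?_⟩
  -- per-step bound
  have hstep : ∀ t : Fin T,
      ℓ (ahat t) (x t) ≤ edual Φ (W t) - edual Φ (W (t + 1)) := by
    intro t
    set c : Θ → ℝ := fun θ => ℓ (A t θ) (x t) with hc
    have hWsucc : W ((t : ℕ) + 1) = W t - c := by
      funext θ
      have hfil : Finset.univ.filter (fun s : Fin T => (s : ℕ) < (t : ℕ) + 1)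
          = insert t (Finset.univ.filter (fun s : Fin T => (s : ℕ) < (t : ℕ))) := by
        ext s
        simp only [Finset.mem_filter, Finset.mem_univ, true_and, Finset.mem_insert]
        constructor
        · intro hs
          rcases Nat.lt_succ_iff_lt_or_eq.1 hs with h | h
          · exact Or.inr h
          · exact Or.inl (Fin.ext h)
        · rintro (rfl | h)
          · exact Nat.lt_succ_self _
          · exact Nat.lt_succ_of_lt h
      simp only [hW, Pi.sub_apply, hfil]
      rw [Finset.sum_insert (by simp)]
      ring
    -- bddBelow of the mixability set
    have hbdd : BddBelow ((fun μ'' => ip μ'' c + breg Φ g μ'' (mfun t)) '' probSimplex Θ) := by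
      refine ⟨-(∑ θ, |c θ|) + (mlow - Φ (mfun t)
        - (∑ θ, |g (mfun t) θ|) + ip (mfun t) (g (mfun t))), ?_⟩
      rintro r ⟨ν, hν, rfl⟩
      have h1 := neg_abs_sum_le_ip ν c hν
      have h2 := hmlow ν hν
      have h3 := ip_le_abs_sum ν (g (mfun t)) hν
      simp only [breg, ip_sub_left]
      linarith
    have hmem : ip (mfun ((t : ℕ) + 1)) c + breg Φ g (mfun ((t : ℕ) + 1)) (mfun t)
        ∈ ((fun μ'' => ip μ'' c + breg Φ g μ'' (mfun t)) '' probSimplex Θ) :=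
      ⟨mfun ((t : ℕ) + 1), relint_subset_simplex (hmrelint _), rfl⟩
    have hle1 := (hahat t (x t)).trans (csInf_le hbdd hmem)
    -- now compute the value
    have hsum0 : ∑ θ, (mfun ((t : ℕ) + 1) θ - mfun t θ) = 0 := by
      rw [Finset.sum_sub_distrib, (hmrelint ((t : ℕ) + 1)).2, (hmrelint t).2, sub_self]
    have hkey := grad_eq hlsc hg hgsmem hfenchel (W t)
      (mfun ((t : ℕ) + 1) - mfun t) hsum0
    have hf1 := hfenchel (W t)
    have hf2 := hfenchel (W ((t : ℕ) + 1))
    rw [hWsucc] at hf2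
    have hgm : gs (W (t : ℕ)) = mfun (t : ℕ) := rfl
    have hmfun_eq : ∀ n : ℕ, mfun n = gs (W n) := fun n => rfl
    rw [hgm] at hkey
    have e1 : edual Φ (W (t : ℕ)) = ip (mfun (t : ℕ)) (W t) - Φ (mfun (t : ℕ)) := by
      rw [hmfun_eq]; exact hfenchel _
    have e2 : edual Φ (W ((t : ℕ) + 1))
        = ip (mfun ((t : ℕ) + 1)) (W ((t : ℕ) + 1)) - Φ (mfun ((t : ℕ) + 1)) := by
      rw [hmfun_eq]; exact hfenchel _
    have e2' : ip (mfun ((t : ℕ) + 1)) (W ((t : ℕ) + 1))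
        = ip (mfun ((t : ℕ) + 1)) (W (t : ℕ)) - ip (mfun ((t : ℕ) + 1)) c := by
      rw [hWsucc, ip_sub_right]
    have hk' := hkey
    rw [ip_sub_left, ip_sub_left] at hk'
    have hbr : breg Φ g (mfun ((t : ℕ) + 1)) (mfun (t : ℕ))
        = Φ (mfun ((t : ℕ) + 1)) - Φ (mfun (t : ℕ))
          - (ip (mfun ((t : ℕ) + 1)) (g (mfun (t : ℕ))) - ip (mfun (t : ℕ)) (g (mfun (t : ℕ)))) := by
      simp [breg, ip_sub_left]
    have hEq : ip (mfun ((t : ℕ) + 1)) c + breg Φ g (mfun ((t : ℕ) + 1)) (mfun t)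
        = edual Φ (W t) - edual Φ (W ((t : ℕ) + 1)) := by
      rw [hbr, e1, e2, e2']
      linarith
    rw [hEq] at hle1
    exact hle1
  -- telescoping sum
  have htel : ∑ t : Fin T, (edual Φ (W t) - edual Φ (W (t + 1)))
      = edual Φ (W 0) - edual Φ (W T) := by
    rw [Fin.sum_univ_eq_sum_range (fun i => edual Φ (W i) - edual Φ (W (i + 1))) T]
    exact Finset.sum_range_sub' (fun i => edual Φ (W i)) T
  have hsumle : ∑ t, ℓ (ahat t) (x t) ≤ edual Φ (W 0) - edual Φ (W T) := by
    rw [← htel]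
    exact Finset.sum_le_sum fun t _ => hstep t
  -- W 0 = g μ0
  have hW0 : W 0 = g μ0 := by
    funext θ
    simp [hW]
  have hE0 : edual Φ (W 0) = ip μ0 (g μ0) - Φ μ0 := by
    rw [hW0, hfenchel, hinv μ0 hμ0]
  -- W T
  have hWT : ∀ θ, W T θ = g μ0 θ - ∑ t, ℓ (A t θ) (x t) := by
    intro θ
    simp only [hW]
    congr 1
    apply Finset.sum_congr _ (fun _ _ => rfl)
    apply Finset.filter_true_of_mem
    intro s _
    exact s.isLt
  have hET : ip μ' (W T) - Φ μ' ≤ edual Φ (W T) := le_edual hlsc (W T) hμ'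
  have hipWT : ip μ' (W T) = ip μ' (g μ0) - ip μ' (fun θ => ∑ t, ℓ (A t θ) (x t)) := by
    have : W T = g μ0 - (fun θ => ∑ t, ℓ (A t θ) (x t)) := by
      funext θ; simpa using hWT θ
    rw [this, ip_sub_right]
  have hbregfinal : breg Φ g μ' μ0 = Φ μ' - Φ μ0 - (ip μ' (g μ0) - ip μ0 (g μ0)) := by
    simp [breg, ip_sub_left]
  linarith [hsumle, hE0 ▸ hsumle]
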